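/- Let β ≥ 1 be an integer, let K₀(x) = exp(−1/(1−x²))·1{−1 < x < 1} and K(x) = K₀(4x+1) − K₀(4x−1). Let n be a positive integer, Δ⃗ = (Δ_1,…,Δ_n) a nonincreasing sequence of nonnegative reals with Δ_n = 0, let r* ∈ [n] satisfy Δ_{n−r*+1} ≤ (1/r*)^{β/(2β+1)}, let m = (r*)^{1/(2β+1)} (assumed a positive integer), and let x_j = (2j−1)/(2m) for j ∈ [m]. For w ∈ {0,1}^m define densities on [0,1] by P_{w,i}(x) = 1{0 ≤ x ≤ 1} for i < n−r*+1 and P_{w,i}(x) = 1{0 ≤ x ≤ 1} + ∑_{j=1}^m w_j·((Δ_{n−r*+1} − Δ_i)/m^β)·K(m(x − x_j)) for i ≥ n−r*+1. Then for any w, w′ ∈ {0,1}^m, the L₂ distance between the final densities satisfies ‖P_{w,n} − P_{w′,n}‖ = √(h(w,w′)) · ‖K‖ · Δ_{n−r*+1} / m^{β+1/2}, where ‖K‖ = (∫K²(x) dx)^{1/2} and h(w,w′) is the Hamming distance. -/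

import Mathlib

open MeasureTheory Finset

/-- The bump function `K₀(x) = exp(−1/(1−x²))·1{−1 < x < 1}`. -/
noncomputable def K₀ (x : ℝ) : ℝ :=
  if -1 < x ∧ x < 1 then Real.exp (-(1 / (1 - x ^ 2))) else 0

/-- The function `K(x) = K₀(4x+1) − K₀(4x−1)` used in the smooth lower-bound construction. -/
noncomputable def Kfun (x : ℝ) : ℝ :=
  K₀ (4 * x + 1) - K₀ (4 * x - 1)

/-- The smooth lower-bound construction: for `w ∈ {0,1}^m`, the `i`-th density (1-based) on
`[0,1]` is the uniform density for `i < n−r*+1`, and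
`1 + ∑_j w_j·((Δ_{n−r*+1} − Δ_i)/m^β)·K(m(x − x_j))` for `i ≥ n−r*+1`, where
`x_j = (2j−1)/(2m)` (here `j = jv.val + 1` for `jv : Fin m`). -/
noncomputable def smoothLbP (n rs m β : ℕ) (Δ : ℕ → ℝ) (w : Fin m → Bool) (i : ℕ)
    (x : ℝ) : ℝ :=
  (if 0 ≤ x ∧ x ≤ 1 then 1 else 0) +
    (if n - rs + 1 ≤ i then
      ∑ j : Fin m, (if w j then (1 : ℝ) else 0) * ((Δ (n - rs + 1) - Δ i) / (m : ℝ) ^ β) *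
        Kfun ((m : ℝ) * (x - (2 * (j : ℕ) + 1) / (2 * (m : ℝ))))
    else 0)


lemma K0_nonneg (x : ℝ) : 0 ≤ K₀ x := by
  unfold K₀; split <;> positivity

lemma K0_le_one (x : ℝ) : K₀ x ≤ 1 := by
  unfold K₀
  split
  · rename_i h
    apply Real.exp_le_one_iff.2
    have h1 : 0 < 1 - x ^ 2 := by nlinarith [h.1, h.2]
    have : 0 ≤ 1 / (1 - x ^ 2) := by positivity
    linarith
  · norm_num

lemma K0_eq_zero {x : ℝ} (h : 1 ≤ |x|) : K₀ x = 0 := by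
  unfold K₀
  rw [if_neg]
  rintro ⟨h1, h2⟩
  rcases le_abs.mp h with h' | h' <;> linarith

lemma Kfun_eq_zero {x : ℝ} (h : 1/2 ≤ |x|) : Kfun x = 0 := by
  unfold Kfun
  rcases le_abs.mp h with h' | h'
  · rw [K0_eq_zero (by rw [le_abs]; left; linarith),
      K0_eq_zero (by rw [le_abs]; left; linarith), sub_zero]
  · rw [K0_eq_zero (by rw [le_abs]; right; linarith),
      K0_eq_zero (by rw [le_abs]; right; linarith), sub_zero]

lemma Kfun_abs_le_one (x : ℝ) : |Kfun x| ≤ 1 := by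
  unfold Kfun
  rw [abs_le]
  constructor <;>
    nlinarith [K0_nonneg (4*x+1), K0_nonneg (4*x-1), K0_le_one (4*x+1), K0_le_one (4*x-1)]

lemma measurable_K0 : Measurable K₀ := by
  unfold K₀
  apply Measurable.ite
  · exact (measurableSet_lt measurable_const measurable_id).inter
      (measurableSet_lt measurable_id measurable_const)
  · fun_prop
  · fun_prop

lemma measurable_Kfun : Measurable Kfun :=
  (measurable_K0.comp (by fun_prop)).sub (measurable_K0.comp (by fun_prop))

lemma integrable_Kfun_sq_comp {m : ℝ} (hm : 1 ≤ m) (c : ℝ) :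
    Integrable (fun x => (Kfun (m * (x - c))) ^ 2) := by
  have hmeas : Measurable (fun x => (Kfun (m * (x - c))) ^ 2) :=
    (measurable_Kfun.comp (by fun_prop)).pow_const 2
  apply Integrable.mono' (g := (Set.Icc (c - 1) (c + 1)).indicator (fun _ => (1 : ℝ)))
  · exact (integrableOn_const (by simp [Real.volume_Icc])).integrable_indicator
      measurableSet_Icc
  · exact hmeas.aestronglyMeasurable
  · filter_upwards with x
    by_cases hx : x ∈ Set.Icc (c - 1) (c + 1)
    · rw [Set.indicator_of_mem hx, Real.norm_eq_abs, abs_pow]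
      calc |Kfun (m * (x - c))| ^ 2 ≤ 1 ^ 2 :=
            pow_le_pow_left₀ (abs_nonneg _) (Kfun_abs_le_one _) 2
        _ = 1 := one_pow 2
    · rw [Set.indicator_of_notMem hx]
      have h1 : 1 ≤ |x - c| := by
        simp only [Set.mem_Icc, not_and_or, not_le] at hx
        rcases hx with h | h <;> rw [le_abs] <;> [right; left] <;> linarith
      have : Kfun (m * (x - c)) = 0 := by
        apply Kfun_eq_zero
        rw [abs_mul, abs_of_nonneg (by linarith : (0:ℝ) ≤ m)]
        nlinarith [abs_nonneg (x - c)]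
      simp [this]

lemma integral_Kfun_sq_comp {m : ℝ} (hm : 0 < m) (c : ℝ) :
    ∫ x, (Kfun (m * (x - c))) ^ 2 = (1 / m) * ∫ x, (Kfun x) ^ 2 := by
  have h1 : ∫ x, (fun y => (Kfun (m * y)) ^ 2) (x - c) = ∫ x, (Kfun (m * x)) ^ 2 :=
    integral_sub_right_eq_self (fun y => (Kfun (m * y)) ^ 2) c
  have h2 : ∫ x, (fun y => (Kfun y) ^ 2) (m * x) = |m⁻¹| • ∫ x, (Kfun x) ^ 2 :=
    Measure.integral_comp_mul_left (fun y => (Kfun y) ^ 2) m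
  simp only at h1 h2
  rw [h1, h2, abs_of_nonneg (by positivity : (0:ℝ) ≤ m⁻¹), smul_eq_mul, one_div]

lemma Kfun_disj {m : ℕ} (hm : 0 < m) (j k : Fin m) (hjk : j ≠ k) (x : ℝ) :
    Kfun ((m:ℝ) * (x - (2 * (j:ℕ) + 1) / (2 * (m:ℝ)))) *
      Kfun ((m:ℝ) * (x - (2 * (k:ℕ) + 1) / (2 * (m:ℝ)))) = 0 := by
  have hm' : (0:ℝ) < m := by exact_mod_cast hm
  by_contra hc
  have hj : |(m:ℝ) * (x - (2 * (j:ℕ) + 1) / (2 * (m:ℝ)))| < 1/2 := by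
    by_contra h; push_neg at h; rw [Kfun_eq_zero h, zero_mul] at hc; exact hc rfl
  have hk : |(m:ℝ) * (x - (2 * (k:ℕ) + 1) / (2 * (m:ℝ)))| < 1/2 := by
    by_contra h; push_neg at h; rw [Kfun_eq_zero h, mul_zero] at hc; exact hc rfl
  have hdiff : (m:ℝ) * (x - (2 * (j:ℕ) + 1) / (2 * (m:ℝ)))
      - (m:ℝ) * (x - (2 * (k:ℕ) + 1) / (2 * (m:ℝ))) = ((k:ℕ):ℝ) - ((j:ℕ):ℝ) := by
    field_simp
    ring
  have h1 : 1 ≤ |((k:ℕ):ℝ) - ((j:ℕ):ℝ)| := by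
    have hne : (j:ℕ) + 1 ≤ (k:ℕ) ∨ (k:ℕ) + 1 ≤ (j:ℕ) := by
      have := Fin.val_ne_of_ne hjk; omega
    rcases hne with h | h <;> rw [le_abs]
    · left
      have : ((j:ℕ):ℝ) + 1 ≤ ((k:ℕ):ℝ) := by exact_mod_cast h
      linarith
    · right
      have : ((k:ℕ):ℝ) + 1 ≤ ((j:ℕ):ℝ) := by exact_mod_cast h
      linarith
  rw [← hdiff] at h1
  have htri := abs_add_le ((m:ℝ) * (x - (2 * (j:ℕ) + 1) / (2 * (m:ℝ))))
      (-((m:ℝ) * (x - (2 * (k:ℕ) + 1) / (2 * (m:ℝ)))))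
  rw [← sub_eq_add_neg, abs_neg] at htri
  linarith

/-- Proposition C.6. For the smooth lower-bound construction, the `L₂`
distance between the final densities equals
`√(h(w,w′))·‖K‖·Δ_{n−r*+1}/m^{β+1/2}`. -/
theorem stmt19 (β : ℕ) (hβ : 1 ≤ β) (n rs m : ℕ) (hn : 0 < n)
    (Δ : ℕ → ℝ)
    (hnonneg : ∀ i ∈ Finset.Icc 1 n, 0 ≤ Δ i)
    (hmono : ∀ i ∈ Finset.Icc 1 (n - 1), Δ (i + 1) ≤ Δ i)
    (hΔn : Δ n = 0)
    (hrs : rs ∈ Finset.Icc 1 n)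
    (hΔrs : Δ (n - rs + 1) ≤ ((1 : ℝ) / rs) ^ ((β : ℝ) / (2 * (β : ℝ) + 1)))
    (hm : 0 < m) (hmrs : m ^ (2 * β + 1) = rs)
    (w w' : Fin m → Bool) :
    Real.sqrt (∫ x, (smoothLbP n rs m β Δ w n x - smoothLbP n rs m β Δ w' n x) ^ 2) =
      Real.sqrt (hammingDist w w' : ℝ) * Real.sqrt (∫ x, (Kfun x) ^ 2) *
        Δ (n - rs + 1) / (m : ℝ) ^ ((β : ℝ) + 1 / 2) := by
  obtain ⟨hrs1, hrs2⟩ := Finset.mem_Icc.mp hrs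
  have hcond : n - rs + 1 ≤ n := by omega
  have hmR : (0:ℝ) < m := by exact_mod_cast hm
  have hm1 : (1:ℝ) ≤ m := by exact_mod_cast hm
  set a : ℝ := Δ (n - rs + 1) with ha_def
  have ha : 0 ≤ a := hnonneg _ (Finset.mem_Icc.mpr ⟨by omega, by omega⟩)
  set I : ℝ := ∫ x, (Kfun x) ^ 2 with hI_def
  have hI : 0 ≤ I := integral_nonneg fun x => sq_nonneg _
  set D : ℝ := a / (m : ℝ) ^ β with hD_def
  set ε : Fin m → ℝ := fun j => (if w j then (1:ℝ) else 0) - (if w' j then (1:ℝ) else 0)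
    with hε_def
  set f : Fin m → ℝ → ℝ :=
    fun j x => Kfun ((m : ℝ) * (x - (2 * (j : ℕ) + 1) / (2 * (m : ℝ)))) with hf_def
  have hdiff : ∀ x, smoothLbP n rs m β Δ w n x - smoothLbP n rs m β Δ w' n x
      = ∑ j : Fin m, (ε j * D) * f j x := by
    intro x
    unfold smoothLbP
    rw [if_pos hcond, if_pos hcond, hΔn, sub_zero]
    rw [add_sub_add_left_eq_sub, ← Finset.sum_sub_distrib]
    exact Finset.sum_congr rfl fun j _ => by simp only [hε_def, hf_def, hD_def]; ring
  have hsq : ∀ x, (∑ j : Fin m, (ε j * D) * f j x) ^ 2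
      = ∑ j : Fin m, (ε j * D) ^ 2 * (f j x) ^ 2 := by
    intro x
    rw [sq, Finset.sum_mul_sum]
    refine Finset.sum_congr rfl fun j _ => ?_
    rw [Finset.sum_eq_single j]
    · ring
    · intro k _ hkj
      have h0 : f j x * f k x = 0 := Kfun_disj hm j k (fun h => hkj h.symm) x
      calc ε j * D * f j x * (ε k * D * f k x)
          = (ε j * D * (ε k * D)) * (f j x * f k x) := by ring
        _ = 0 := by rw [h0, mul_zero]
    · intro h; exact absurd (Finset.mem_univ j) h
  have hint : ∀ j : Fin m, Integrable (fun x => (ε j * D) ^ 2 * (f j x) ^ 2) :=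
    fun j => (integrable_Kfun_sq_comp hm1 _).const_mul _
  have hεsq : ∀ j : Fin m, (ε j) ^ 2 = if w j ≠ w' j then (1:ℝ) else 0 := by
    intro j
    simp only [hε_def]
    cases hwj : w j <;> cases hwj' : w' j <;> norm_num
  have hH : (hammingDist w w' : ℝ) = ∑ j : Fin m, (ε j) ^ 2 := by
    simp only [hεsq]
    rw [Finset.sum_boole]
    rfl
  have hH0 : (0:ℝ) ≤ (hammingDist w w' : ℝ) := Nat.cast_nonneg _
  have hIEq : ∫ x, (smoothLbP n rs m β Δ w n x - smoothLbP n rs m β Δ w' n x) ^ 2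
      = (hammingDist w w' : ℝ) * D ^ 2 * ((1 / m) * I) := by
    simp only [hdiff, hsq]
    rw [integral_finset_sum _ fun j _ => hint j]
    have : ∀ j : Fin m, ∫ x, (ε j * D) ^ 2 * (f j x) ^ 2
        = (ε j * D) ^ 2 * ((1 / m) * I) := by
      intro j
      rw [integral_const_mul, hf_def]
      rw [integral_Kfun_sq_comp hmR]
    simp only [this]
    rw [← Finset.sum_mul]
    congr 1
    rw [hH, Finset.sum_mul]
    exact Finset.sum_congr rfl fun j _ => by ring
  rw [hIEq]
  have hpow : ((m:ℝ) ^ ((β : ℝ) + 1/2)) ^ 2 = (m:ℝ) ^ (2 * β) * m := by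
    rw [← Real.rpow_natCast ((m:ℝ) ^ ((β : ℝ) + 1/2)) 2, ← Real.rpow_mul hmR.le]
    have : ((β : ℝ) + 1/2) * (2:ℕ) = ((2 * β + 1 : ℕ) : ℝ) := by push_cast; ring
    rw [this, Real.rpow_natCast]
    rw [pow_succ]
  have hY : Real.sqrt (hammingDist w w' : ℝ) * Real.sqrt I * a / (m:ℝ) ^ ((β:ℝ) + 1/2)
      ≥ 0 := by positivity
  have h1 : Real.sqrt ((hammingDist w w') : ℝ) ^ 2 = ((hammingDist w w') : ℝ) :=
    Real.sq_sqrt hH0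
  have h2 : Real.sqrt I ^ 2 = I := Real.sq_sqrt hI
  have hmβ : ((m:ℝ) ^ β) ≠ 0 := by positivity
  have hm0 : (m:ℝ) ≠ 0 := ne_of_gt hmR
  rw [show (hammingDist w w' : ℝ) * D ^ 2 * ((1 / m) * I)
      = (Real.sqrt (hammingDist w w' : ℝ) * Real.sqrt I * a / (m:ℝ) ^ ((β:ℝ) + 1/2)) ^ 2 by
    simp only [hD_def, div_pow, mul_pow, h1, h2, hpow]
    field_simp
    ring]
  rw [Real.sqrt_sq hY]
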